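/- Let X be a finite set and K : X × X → ℂ satisfy condition (A1). Suppose that for every n, all pairwise distinct x₁, …, xₙ ∈ X, and every y ∈ ℂⁿ, there exists a ∈ ℂⁿ such that the function g(t) := ∑_{j=1}^n a_j K(t, x_j) satisfies g(x_i) = y_i for all i ∈ {1, …, n} and max_{t∈X} |g(t)| ≤ max_{t∈X} |h(t)| for every function h : X → ℂ with h(x_i) = y_i for all i. Then K satisfies condition (A4): for all pairwise distinct x₁, …, x_{n+1} ∈ X, ‖(K[x])^{-1} K_x(x_{n+1})‖₁ ≤ 1. -/

import Mathlib

open Matrix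

/-- The kernel matrix `K[x]`, with `(j,k)` entry `K(x_k, x_j)`. -/
noncomputable def kernelMatrix {X : Type*} (K : X → X → ℂ) {n : ℕ} (x : Fin n → X) :
    Matrix (Fin n) (Fin n) ℂ := Matrix.of fun j k => K (x k) (x j)

/-- The vector `K_x(t)`, with `j`-th entry `K(t, x_j)`. -/
noncomputable def kernelVec {X : Type*} (K : X → X → ℂ) {n : ℕ} (x : Fin n → X) (t : X) :
    Fin n → ℂ := fun j => K t (x j)

/-- The `ℓ¹` norm of a vector in `ℂⁿ`. -/
noncomputable def l1norm {n : ℕ} (v : Fin n → ℂ) : ℝ := ∑ j, ‖v j‖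

/-- Condition (A1): every kernel matrix at finitely many pairwise distinct points is
nonsingular. -/
def CondA1 {X : Type*} (K : X → X → ℂ) : Prop :=
  ∀ (n : ℕ) (x : Fin n → X), Function.Injective x → IsUnit (kernelMatrix K x).det

theorem stmt_12 {X : Type*} [Fintype X] (K : X → X → ℂ) (hA1 : CondA1 K)
    (hext : ∀ (n : ℕ) (x : Fin n → X), Function.Injective x → ∀ y : Fin n → ℂ,
      ∃ a : Fin n → ℂ, (∀ i, (∑ j, a j * K (x i) (x j)) = y i) ∧
        ∀ h : X → ℂ, (∀ i, h (x i) = y i) →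
          (⨆ t : X, ‖∑ j, a j * K t (x j)‖) ≤ ⨆ t : X, ‖h t‖) :
    ∀ (n : ℕ) (x : Fin (n + 1) → X), Function.Injective x →
      l1norm ((kernelMatrix K (fun i : Fin n => x i.castSucc))⁻¹ *ᵥ
        kernelVec K (fun i : Fin n => x i.castSucc) (x (Fin.last n))) ≤ 1 := by
  classical
  intro n x hx
  have : Nonempty X := ⟨x 0⟩
  set x' : Fin n → X := fun i => x i.castSucc with hx'
  have hx'inj : Function.Injective x' := fun i j h => Fin.castSucc_injective n (hx h)
  set N := kernelMatrix K x' with hN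
  have hNdet : IsUnit N.det := hA1 n x' hx'inj
  set w := kernelVec K x' (x (Fin.last n)) with hw
  set v := N⁻¹ *ᵥ w with hv
  set y : Fin n → ℂ :=
    fun i => if v i = 0 then 0 else (starRingEnd ℂ) (v i) / (‖v i‖ : ℂ) with hy
  have hyabs : ∀ i, ‖y i‖ ≤ 1 := by
    intro i
    by_cases h : v i = 0
    · simp [hy, h]
    · have habs : ‖v i‖ ≠ 0 := by simpa using h
      simp [hy, h, map_div₀, Complex.norm_conj, Complex.norm_real,
        abs_of_nonneg (norm_nonneg (v i)), div_self habs]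
  have hvy : ∀ i, v i * y i = (‖v i‖ : ℂ) := by
    intro i
    by_cases h : v i = 0
    · simp [hy, h]
    · have habs : (‖v i‖ : ℂ) ≠ 0 := by
        simpa using h
      simp only [hy, if_neg h]
      rw [mul_div_assoc', Complex.mul_conj']
      rw [sq, mul_div_assoc, div_self habs, mul_one]
  obtain ⟨a, ha1, ha2⟩ := hext n x' hx'inj y
  have hMa : Nᵀ *ᵥ a = y := by
    funext i
    have := ha1 i
    simpa [Matrix.mulVec, dotProduct, hN, kernelMatrix, Matrix.transpose_apply,
      mul_comm] using this
  have hdetT : IsUnit Nᵀ.det := by rwa [Matrix.det_transpose]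
  have haeq : a = Nᵀ⁻¹ *ᵥ y := by
    rw [← hMa, Matrix.mulVec_mulVec, Matrix.nonsing_inv_mul _ hdetT, Matrix.one_mulVec]
  have key : (∑ j, a j * K (x (Fin.last n)) (x' j)) = ((l1norm v : ℝ) : ℂ) := by
    have hT : Nᵀ⁻¹ = (N⁻¹)ᵀ := (Matrix.transpose_nonsing_inv N).symm
    calc (∑ j, a j * K (x (Fin.last n)) (x' j))
        = ∑ j, (∑ i, N⁻¹ i j * y i) * w j := by
          rw [haeq]
          refine Finset.sum_congr rfl fun j _ => ?_
          rw [hT]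
          simp [Matrix.mulVec, dotProduct, Matrix.transpose_apply, hw, kernelVec]
      _ = ∑ i, (∑ j, N⁻¹ i j * w j) * y i := by
          simp only [Finset.sum_mul]
          rw [Finset.sum_comm]
          exact Finset.sum_congr rfl fun i _ => Finset.sum_congr rfl fun j _ => by ring
      _ = ∑ i, v i * y i := by
          refine Finset.sum_congr rfl fun i _ => ?_
          simp [hv, Matrix.mulVec, dotProduct]
      _ = ((l1norm v : ℝ) : ℂ) := by
          simp only [hvy, l1norm]
          push_cast
          rfl
  have hnn : 0 ≤ l1norm v := Finset.sum_nonneg fun i _ => norm_nonneg _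
  have hnorm : l1norm v = ‖∑ j, a j * K (x (Fin.last n)) (x' j)‖ := by
    rw [key, Complex.norm_real, Real.norm_eq_abs, abs_of_nonneg hnn]
  set h : X → ℂ := fun t => if ht : ∃ i, x' i = t then y ht.choose else 0 with hh
  have hhval : ∀ i, h (x' i) = y i := by
    intro i
    have he : ∃ j, x' j = x' i := ⟨i, rfl⟩
    simp only [hh, dif_pos he]
    congr 1
    exact hx'inj he.choose_spec
  have hhabs : ∀ t, ‖h t‖ ≤ 1 := by
    intro t
    simp only [hh]
    split
    · exact hyabs _
    · simp
  calc l1norm v = ‖∑ j, a j * K (x (Fin.last n)) (x' j)‖ := hnorm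
    _ ≤ ⨆ t, ‖∑ j, a j * K t (x' j)‖ :=
        le_ciSup (f := fun t => ‖∑ j, a j * K t (x' j)‖)
          (Set.Finite.bddAbove (Set.finite_range _)) (x (Fin.last n))
    _ ≤ ⨆ t, ‖h t‖ := ha2 h hhval
    _ ≤ 1 := ciSup_le hhabs
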